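/- Given a 4-algebra A, a vector space V, and bilinear maps ▷ : A × V → V, f : A × A → V, ·_V : V × V → V, the product on V × A defined by (x,a)∘(y,b) = (x·_V y + a▷y + b▷x + f(a,b), a·b) makes V × A a 4-algebra if and only if: (CS1) (V, ·_V) is a 4-algebra and f is symmetric; (CS2) f(a²,a²) + f(a,a)·_V f(a,a) + 2 a²▷f(a,a) = 0 for all a ∈ A; (CS3) a²▷x² + x²·_V f(a,a) + 2 x²·_V (a▷x) + 2 (a▷x)² + 2 (a▷x)·_V f(a,a) + 2 a²▷(a▷x) = 0 for all a ∈ A, x ∈ V. -/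
import Mathlib


structure FourAlgebra (k : Type*) (A : Type*) [Field k] [AddCommGroup A] [Module k A] where
  mul : A →ₗ[k] A →ₗ[k] A
  comm : ∀ a b : A, mul a b = mul b a
  four : ∀ a : A, mul (mul a a) (mul a a) = 0

private lemma stmt7_aux {k A V : Type*} [Field k] [AddCommGroup A] [Module k A]
    [AddCommGroup V] [Module k V] (FA : FourAlgebra k A)
    (tr : A →ₗ[k] V →ₗ[k] V) (f : A →ₗ[k] A →ₗ[k] V) (mv : V →ₗ[k] V →ₗ[k] V)
    (hmv : ∀ x y : V, mv x y = mv y x) (x : V) (a : A) :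
    mv (mv x x + tr a x + tr a x + f a a) (mv x x + tr a x + tr a x + f a a)
      + tr (FA.mul a a) (mv x x + tr a x + tr a x + f a a)
      + tr (FA.mul a a) (mv x x + tr a x + tr a x + f a a)
      + f (FA.mul a a) (FA.mul a a)
      = mv (mv x x) (mv x x)
        + (f (FA.mul a a) (FA.mul a a) + mv (f a a) (f a a)
            + 2 • tr (FA.mul a a) (f a a))
        + 2 • (tr (FA.mul a a) (mv x x) + mv (mv x x) (f a a)
            + 2 • mv (mv x x) (tr a x) + 2 • mv (tr a x) (tr a x)
            + 2 • mv (tr a x) (f a a) + 2 • tr (FA.mul a a) (tr a x)) := by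
  simp only [map_add, LinearMap.add_apply, two_nsmul, smul_add]
  rw [hmv (tr a x) (mv x x), hmv (f a a) (mv x x), hmv (f a a) (tr a x)]
  abel

theorem stmt7 (k A V : Type*) [Field k] [AddCommGroup A] [Module k A]
    [AddCommGroup V] [Module k V] (h2 : (2 : k) ≠ 0) (FA : FourAlgebra k A)
    (tr : A →ₗ[k] V →ₗ[k] V) (f : A →ₗ[k] A →ₗ[k] V) (mv : V →ₗ[k] V →ₗ[k] V) :
    let p : V × A → V × A → V × A := fun z w =>
      (mv z.1 w.1 + tr z.2 w.1 + tr w.2 z.1 + f z.2 w.2, FA.mul z.2 w.2)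
    ((∀ z w, p z w = p w z) ∧ (∀ z, p (p z z) (p z z) = 0)) ↔
      (((∀ x y : V, mv x y = mv y x) ∧ (∀ x : V, mv (mv x x) (mv x x) = 0) ∧
          (∀ a b : A, f a b = f b a)) ∧
       (∀ a : A, f (FA.mul a a) (FA.mul a a) + mv (f a a) (f a a)
          + 2 • tr (FA.mul a a) (f a a) = 0) ∧
       (∀ (a : A) (x : V), tr (FA.mul a a) (mv x x) + mv (mv x x) (f a a)
          + 2 • mv (mv x x) (tr a x) + 2 • mv (tr a x) (tr a x)
          + 2 • mv (tr a x) (f a a) + 2 • tr (FA.mul a a) (tr a x) = 0)) := by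
  intro p
  have h2V : ∀ v : V, 2 • v = 0 → v = 0 := by
    intro v hv
    have : (2 : k) • v = 0 := by
      rw [show ((2 : k) = ((2 : ℕ) : k)) by norm_num, Nat.cast_smul_eq_nsmul]
      exact hv
    rcases smul_eq_zero.mp this with h | h
    · exact absurd h h2
    · exact h
  constructor
  · rintro ⟨hc, h4⟩
    have hmv : ∀ x y : V, mv x y = mv y x := by
      intro x y
      have := congrArg Prod.fst (hc (x, 0) (y, 0))
      simpa [p] using this
    have hf : ∀ a b : A, f a b = f b a := by
      intro a b
      have := congrArg Prod.fst (hc ((0 : V), a) (0, b))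
      simpa [p] using this
    have hQ : ∀ (x : V) (a : A),
        mv (mv x x) (mv x x)
        + (f (FA.mul a a) (FA.mul a a) + mv (f a a) (f a a)
            + 2 • tr (FA.mul a a) (f a a))
        + 2 • (tr (FA.mul a a) (mv x x) + mv (mv x x) (f a a)
            + 2 • mv (mv x x) (tr a x) + 2 • mv (tr a x) (tr a x)
            + 2 • mv (tr a x) (f a a) + 2 • tr (FA.mul a a) (tr a x)) = 0 := by
      intro x a
      have h := congrArg Prod.fst (h4 (x, a))
      simp only [p, Prod.fst_zero] at h
      rw [← stmt7_aux FA tr f mv hmv x a]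
      exact h
    have hV4 : ∀ x : V, mv (mv x x) (mv x x) = 0 := by
      intro x
      have := hQ x 0
      simpa using this
    have hcs2 : ∀ a : A, f (FA.mul a a) (FA.mul a a) + mv (f a a) (f a a)
        + 2 • tr (FA.mul a a) (f a a) = 0 := by
      intro a
      have := hQ 0 a
      simpa using this
    refine ⟨⟨hmv, hV4, hf⟩, hcs2, ?_⟩
    intro a x
    apply h2V
    have h := hQ x a
    rw [hV4 x, hcs2 a] at h
    simpa using h
  · rintro ⟨⟨hmv, hV4, hf⟩, hcs2, hcs3⟩
    constructor
    · intro z w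
      refine Prod.ext ?_ ?_
      · show mv z.1 w.1 + tr z.2 w.1 + tr w.2 z.1 + f z.2 w.2
          = mv w.1 z.1 + tr w.2 z.1 + tr z.2 w.1 + f w.2 z.2
        rw [hmv, hf]
        abel
      · exact FA.comm z.2 w.2
    · rintro ⟨x, a⟩
      refine Prod.ext ?_ ?_
      · show mv (mv x x + tr a x + tr a x + f a a) (mv x x + tr a x + tr a x + f a a)
          + tr (FA.mul a a) (mv x x + tr a x + tr a x + f a a)
          + tr (FA.mul a a) (mv x x + tr a x + tr a x + f a a)
          + f (FA.mul a a) (FA.mul a a) = (0 : V × A).1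
        rw [stmt7_aux FA tr f mv hmv x a, hV4 x, hcs2 a, hcs3 a x]
        simp
      · exact FA.four a
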